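/- Let u = x_1⋯x_p and v = y_1⋯y_q with p, q ≥ 0 and x_i, y_j ∈ X for 1 ≤ i ≤ p, 1 ≤ j ≤ q (so u and v are words in the free monoid M(X), possibly empty). Then Δ(u⋄v) = Δ(u)⋄Δ(v). -/

import Mathlib

open TensorProduct

universe u v

/-- Letters of Rota-Baxter bracketed words: either a variable from `X` or a
bracketed word `⌊w⌋` (a list of letters). -/
inductive RBL (X : Type u) : Type u
  | var : X → RBL X
  | br : List (RBL X) → RBL X

namespace RBL

variable {X : Type u}

/-- `a.isBr = true` iff the letter `a` is a bracketed element `⌊w⌋ ∈ ⌊X_∞⌋`. -/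
def isBr : RBL X → Bool
  | var _ => false
  | br _ => true

mutual
  /-- Validity of a letter: the inside of a bracket must be a Rota-Baxter bracketed word. -/
  def valid : RBL X → Prop
    | var _ => True
    | br l => wordValid l
  /-- `wordValid l` says that the list of letters `l` is a Rota-Baxter bracketed word,
  i.e. all letters are valid and the letters alternate (no two consecutive brackets). -/
  def wordValid : List (RBL X) → Prop
    | [] => True
    | [a] => valid a
    | a :: b :: l => valid a ∧ ¬(a.isBr = true ∧ b.isBr = true) ∧ wordValid (b :: l)
end

lemma wordValid_nil : wordValid ([] : List (RBL X)) := by simp [wordValid]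

lemma wordValid_var (x : X) : wordValid [var x] := by simp [wordValid, valid]

lemma wordValid_br {l : List (RBL X)} (h : wordValid l) : wordValid [br l] := by
  simpa [wordValid, valid] using h

mutual
  /-- The total degree of a letter. -/
  def degL : RBL X → ℕ
    | var _ => 1
    | br l => degW l + 1
  /-- The total degree of a word: the number of occurrences of brackets (i.e. of `P`)
  plus the number of occurrences of letters of `X`. -/
  def degW : List (RBL X) → ℕ
    | [] => 0
    | a :: l => degL a + degW l
end

end RBL

/-- The set `X_∞` of Rota-Baxter bracketed words on `X`. -/
def RBWord (X : Type u) : Type u := {l : List (RBL X) // RBL.wordValid l}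

namespace RBWord

variable {X : Type u}

/-- The empty word `1`. -/
def one : RBWord X := ⟨[], RBL.wordValid_nil⟩

/-- The total degree of a Rota-Baxter bracketed word. -/
def deg (w : RBWord X) : ℕ := RBL.degW w.1

end RBWord

variable (k : Type v) [CommRing k] (X : Type u)

/-- The free `k`-module `kX_∞` on the Rota-Baxter bracketed words. -/
abbrev RBMod : Type max u v := RBWord X →₀ k

variable {X}

/-- A Rota-Baxter bracketed word viewed as a basis element of `kX_∞`. -/
noncomputable def sing (w : RBWord X) : RBMod k X := Finsupp.single w 1

variable (X)

/-- The Rota-Baxter operator `P` on `kX_∞`, sending a basis word `w` to `⌊w⌋`. -/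
noncomputable def Pop : RBMod k X →ₗ[k] RBMod k X :=
  Finsupp.lmapDomain k k fun w => (⟨[RBL.br w.1], RBL.wordValid_br w.2⟩ : RBWord X)

/-- Concatenation on the left by `u₀` and on the right by `v₀`, as a linear map on `kX_∞`
(sending basis words whose concatenation is not valid to `0`; in all uses below
the concatenations are valid). -/
noncomputable def concatLR (u₀ v₀ : List (RBL X)) : RBMod k X →ₗ[k] RBMod k X :=
  Finsupp.lsum k fun w =>
    letI := Classical.dec (RBL.wordValid (u₀ ++ w.1 ++ v₀))
    if h : RBL.wordValid (u₀ ++ w.1 ++ v₀) then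
      Finsupp.lsingle (⟨u₀ ++ w.1 ++ v₀, h⟩ : RBWord X) else 0

/-- The counit `ε : kX_∞ → k`, `ε(1) = 1` and `ε(w) = 0` for basis words `w ≠ 1`. -/
noncomputable def eps : RBMod k X →ₗ[k] k := Finsupp.lapply RBWord.one

/-- The homogeneous component `H^(n)` of `kX_∞`: the span of the basis words of total
degree `n`. -/
noncomputable def Hdeg (n : ℕ) : Submodule k (RBMod k X) :=
  Finsupp.supported k k {w : RBWord X | w.deg = n}

variable (lam : k)

/-- The data of the product `⋄` on the free Rota-Baxter algebra `kX_∞` of weight `lam`,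
together with its recursive defining equations:
* if the concatenation of `u` and `v` is again a Rota-Baxter bracketed word (in particular
  if `u` or `v` is empty, or if the last letter of `u` or the first letter of `v` is a
  variable), then `u ⋄ v` is the concatenation `uv`;
* if `u = u₀⌊ā⌋` and `v = ⌊b̄⌋v₀`, then
  `u ⋄ v = u₀(⌊⌊ā⌋ ⋄ b̄⌋ + ⌊ā ⋄ ⌊b̄⌋⌋ + λ⌊ā ⋄ b̄⌋)v₀`. -/
structure FreeRBAData where
  /-- the product `⋄`, as a `k`-bilinear map -/
  d : RBMod k X →ₗ[k] RBMod k X →ₗ[k] RBMod k X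
  d_concat : ∀ (u v : RBWord X) (h : RBL.wordValid (u.1 ++ v.1)),
    d (sing k u) (sing k v) = sing k ⟨u.1 ++ v.1, h⟩
  d_br : ∀ (u₀ v₀ : List (RBL X)) (a b : RBWord X)
    (hu : RBL.wordValid (u₀ ++ [RBL.br a.1])) (hv : RBL.wordValid (RBL.br b.1 :: v₀)),
    d (sing k ⟨u₀ ++ [RBL.br a.1], hu⟩) (sing k ⟨RBL.br b.1 :: v₀, hv⟩)
      = concatLR k X u₀ v₀
          (Pop k X (d (Pop k X (sing k a)) (sing k b))
            + Pop k X (d (sing k a) (Pop k X (sing k b)))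
            + lam • Pop k X (d (sing k a) (sing k b)))

namespace FreeRBAData

variable {k X lam}

/-- The componentwise product `⋄ ⊗ ⋄` on `kX_∞ ⊗ kX_∞`. -/
noncomputable def mulT (D : FreeRBAData k X lam) :
    (RBMod k X ⊗[k] RBMod k X) →ₗ[k] (RBMod k X ⊗[k] RBMod k X) →ₗ[k]
      (RBMod k X ⊗[k] RBMod k X) :=
  TensorProduct.map₂ D.d D.d

end FreeRBAData

/-- The free Rota-Baxter algebra `kX_∞` of weight `lam` together with the coproduct `Δ`,
characterized by its recursive defining equations:
`Δ(1) = 1 ⊗ 1`, `Δ(x) = x ⊗ 1 + 1 ⊗ x` for `x ∈ X`,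
`Δ(⌊w⌋) = ⌊w⌋ ⊗ 1 + (id ⊗ P)Δ(w)`, and
`Δ(w₁ ⋄ ⋯ ⋄ w_m) = Δ(w₁) ⋄ ⋯ ⋄ Δ(w_m)` for the `⋄`-factorization of a word into its
(alternating) sequence of letters. -/
structure FreeRBBialgData extends FreeRBAData k X lam where
  /-- the coproduct `Δ` -/
  Dl : RBMod k X →ₗ[k] (RBMod k X ⊗[k] RBMod k X)
  Dl_one : Dl (sing k RBWord.one) = sing k RBWord.one ⊗ₜ[k] sing k RBWord.one
  Dl_var : ∀ (x : X),
    Dl (sing k ⟨[RBL.var x], RBL.wordValid_var x⟩)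
      = sing k ⟨[RBL.var x], RBL.wordValid_var x⟩ ⊗ₜ[k] sing k RBWord.one
        + sing k RBWord.one ⊗ₜ[k] sing k ⟨[RBL.var x], RBL.wordValid_var x⟩
  Dl_br : ∀ w : RBWord X,
    Dl (Pop k X (sing k w))
      = Pop k X (sing k w) ⊗ₜ[k] sing k RBWord.one
        + TensorProduct.map LinearMap.id (Pop k X) (Dl (sing k w))
  Dl_cons : ∀ (a : RBL X) (l : List (RBL X)) (h : RBL.wordValid (a :: l))
    (ha : RBL.wordValid [a]) (hl : RBL.wordValid l), l ≠ [] →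
    Dl (sing k ⟨a :: l, h⟩)
      = TensorProduct.map₂ d d (Dl (sing k ⟨[a], ha⟩)) (Dl (sing k ⟨l, hl⟩))

namespace RBL

variable {X : Type u}

lemma wordValid_map_var (s : List X) : wordValid (s.map RBL.var) := by
  induction s with
  | nil => exact wordValid_nil
  | cons a t ih =>
    cases t with
    | nil => exact wordValid_var a
    | cons b t' =>
      simp only [List.map_cons] at ih ⊢
      exact ⟨by simp [valid], by simp [isBr], ih⟩

end RBL

variable {X}

/-- The word `x₁ ⋯ x_m ∈ M(X)` as a basis element of `kX_∞`. -/
noncomputable def varWord (s : List X) : RBMod k X :=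
  sing k ⟨s.map RBL.var, RBL.wordValid_map_var s⟩

/-- A letter in `X ∪ ⌊X_∞⌋`, viewed as a basis element of `kX_∞` (invalid letters are
sent to `0`; they do not occur below). -/
noncomputable def letterMod (a : RBL X) : RBMod k X :=
  letI := Classical.dec (RBL.wordValid [a])
  if h : RBL.wordValid [a] then sing k ⟨[a], h⟩ else 0

variable (X)

/-- The tensor product `H^(p) ⊗ H^(q)` of homogeneous components, as a submodule of
`kX_∞ ⊗ kX_∞`. -/
noncomputable def HdegT (p q : ℕ) : Submodule k (RBMod k X ⊗[k] RBMod k X) :=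
  Submodule.map₂ (TensorProduct.mk k (RBMod k X) (RBMod k X)) (Hdeg k X p) (Hdeg k X q)

namespace FreeRBAData

variable {k X lam}

/-- The `⋄`-product `w₁ ⋄ (w₂ ⋄ (⋯ ⋄ (w_m ⋄ 1)))` of a sequence of letters. -/
noncomputable def prodList (D : FreeRBAData k X lam) (l : List (RBL X)) : RBMod k X :=
  l.foldr (fun a acc => D.d (letterMod k a) acc) (sing k RBWord.one)

end FreeRBAData

section Aux

variable {k : Type v} [CommRing k] {X : Type u} {lam : k}

lemma sing_congr {l l' : List (RBL X)} (h : RBL.wordValid l) (h' : RBL.wordValid l')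
    (e : l = l') : sing k ⟨l, h⟩ = sing k ⟨l', h'⟩ := by subst e; rfl

lemma varWord_eq_sing (s : List X) (h : RBL.wordValid (s.map RBL.var)) :
    varWord k s = sing k ⟨s.map RBL.var, h⟩ := rfl

lemma d_varWord (D : FreeRBAData k X lam) (s t : List X) :
    D.d (varWord k s) (varWord k t) = varWord k (s ++ t) := by
  have h : RBL.wordValid ((⟨s.map RBL.var, RBL.wordValid_map_var s⟩ : RBWord X).1
      ++ (⟨t.map RBL.var, RBL.wordValid_map_var t⟩ : RBWord X).1) := by
    simpa [← List.map_append] using RBL.wordValid_map_var (X := X) (s ++ t)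
  rw [varWord, varWord, D.d_concat _ _ h, varWord]
  exact sing_congr _ _ (by simp)

lemma d_one_left (D : FreeRBAData k X lam) (x : RBMod k X) :
    D.d (sing k RBWord.one) x = x := by
  have hb : ∀ w : RBWord X, D.d (sing k RBWord.one) (sing k w) = sing k w := by
    intro w
    have h : RBL.wordValid (([] : List (RBL X)) ++ w.1) := by simpa using w.2
    rw [D.d_concat RBWord.one w h]
    exact sing_congr _ _ (by simp [RBWord.one])
  induction x using Finsupp.induction_linear with
  | zero => simp
  | add a b ha hb => simp [ha, hb]
  | single w b =>
    have : (Finsupp.single w b : RBMod k X) = b • sing k w := by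
      simp [sing, Finsupp.smul_single]
    rw [this, map_smul, hb w]

lemma d_one_right (D : FreeRBAData k X lam) (s : List X) :
    D.d (varWord k s) (sing k RBWord.one) = varWord k s := by
  have := d_varWord D s []
  simpa [varWord, RBWord.one] using this

/-- The submodule spanned by pure tensors of `var` words. -/
noncomputable def TW : Submodule k (RBMod k X ⊗[k] RBMod k X) :=
  Submodule.span k {z | ∃ s t : List X, z = varWord k s ⊗ₜ[k] varWord k t}

lemma mulT_mem_TW (D : FreeRBAData k X lam) {A B : RBMod k X ⊗[k] RBMod k X}
    (hA : A ∈ (TW : Submodule k _)) (hB : B ∈ (TW : Submodule k _)) :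
    D.mulT A B ∈ (TW : Submodule k _) := by
  induction hA using Submodule.span_induction with
  | mem x hx =>
    obtain ⟨s₁, t₁, rfl⟩ := hx
    induction hB using Submodule.span_induction with
    | mem y hy =>
      obtain ⟨s₂, t₂, rfl⟩ := hy
      rw [FreeRBAData.mulT, TensorProduct.map₂_apply_tmul, TensorProduct.map_tmul,
        d_varWord, d_varWord]
      exact Submodule.subset_span ⟨_, _, rfl⟩
    | zero => simp
    | add a b _ _ ha hb => rw [map_add]; exact Submodule.add_mem _ ha hb
    | smul c a _ ha => rw [map_smul]; exact Submodule.smul_mem _ _ ha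
  | zero => simp
  | add a b _ _ ha hb => rw [map_add, LinearMap.add_apply]; exact Submodule.add_mem _ ha hb
  | smul c a _ ha => rw [map_smul, LinearMap.smul_apply]; exact Submodule.smul_mem _ _ ha

lemma mulT_one_left (D : FreeRBAData k X lam) (z : RBMod k X ⊗[k] RBMod k X) :
    D.mulT (sing k RBWord.one ⊗ₜ[k] sing k RBWord.one) z = z := by
  have h1 : D.d (sing k RBWord.one) = LinearMap.id := by
    exact LinearMap.ext (d_one_left D)
  rw [FreeRBAData.mulT, TensorProduct.map₂_apply_tmul, h1, TensorProduct.map_id,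
    LinearMap.id_apply]

lemma mulT_one_right (D : FreeRBAData k X lam) {z : RBMod k X ⊗[k] RBMod k X}
    (hz : z ∈ (TW : Submodule k _)) :
    D.mulT z (sing k RBWord.one ⊗ₜ[k] sing k RBWord.one) = z := by
  induction hz using Submodule.span_induction with
  | mem x hx =>
    obtain ⟨s₁, t₁, rfl⟩ := hx
    rw [FreeRBAData.mulT, TensorProduct.map₂_apply_tmul, TensorProduct.map_tmul,
      d_one_right, d_one_right]
  | zero => simp
  | add a b _ _ ha hb => rw [map_add, LinearMap.add_apply, ha, hb]
  | smul c a _ ha => rw [map_smul, LinearMap.smul_apply, ha]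

lemma mulT_assoc (D : FreeRBAData k X lam) {A B C : RBMod k X ⊗[k] RBMod k X}
    (hA : A ∈ (TW : Submodule k _)) (hB : B ∈ (TW : Submodule k _))
    (hC : C ∈ (TW : Submodule k _)) :
    D.mulT A (D.mulT B C) = D.mulT (D.mulT A B) C := by
  induction hA using Submodule.span_induction with
  | mem x hx =>
    obtain ⟨s₁, t₁, rfl⟩ := hx
    induction hB using Submodule.span_induction with
    | mem y hy =>
      obtain ⟨s₂, t₂, rfl⟩ := hy
      induction hC using Submodule.span_induction with
      | mem z hz =>
        obtain ⟨s₃, t₃, rfl⟩ := hz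
        simp only [FreeRBAData.mulT, TensorProduct.map₂_apply_tmul,
          TensorProduct.map_tmul, d_varWord, List.append_assoc]
      | zero => simp
      | add a b _ _ ha hb => simp only [map_add, ha, hb]
      | smul c a _ ha => simp only [map_smul, ha]
    | zero => simp
    | add a b _ _ ha hb => simp only [map_add, LinearMap.add_apply, ha, hb]
    | smul c a _ ha => simp only [map_smul, LinearMap.smul_apply, ha]
  | zero => simp
  | add a b _ _ ha hb => simp only [map_add, LinearMap.add_apply, ha, hb]
  | smul c a _ ha => simp only [map_smul, LinearMap.smul_apply, ha]

lemma Dl_varWord_mem_TW (D : FreeRBBialgData k X lam) (s : List X) :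
    D.Dl (varWord k s) ∈ (TW : Submodule k (RBMod k X ⊗[k] RBMod k X)) := by
  induction s with
  | nil =>
    rw [show varWord k ([] : List X) = sing k RBWord.one from rfl, D.Dl_one]
    exact Submodule.subset_span ⟨[], [], rfl⟩
  | cons x s ih =>
    cases s with
    | nil =>
      rw [show varWord k [x] = sing k ⟨[RBL.var x], RBL.wordValid_var x⟩ from rfl,
        D.Dl_var]
      exact Submodule.add_mem _
        (Submodule.subset_span ⟨[x], [], rfl⟩)
        (Submodule.subset_span ⟨[], [x], rfl⟩)
    | cons y s' =>
      have hne : ((y :: s').map RBL.var : List (RBL X)) ≠ [] := by simp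
      rw [show varWord k (x :: y :: s')
          = sing k ⟨RBL.var x :: (y :: s').map RBL.var,
              RBL.wordValid_map_var (x :: y :: s')⟩ from rfl,
        D.Dl_cons (RBL.var x) ((y :: s').map RBL.var) _ (RBL.wordValid_var x)
          (RBL.wordValid_map_var (y :: s')) hne]
      have h1 : D.Dl (varWord k [x]) ∈ (TW : Submodule k (RBMod k X ⊗[k] RBMod k X)) := by
        rw [show varWord k [x] = sing k ⟨[RBL.var x], RBL.wordValid_var x⟩ from rfl,
          D.Dl_var]
        exact Submodule.add_mem _
          (Submodule.subset_span ⟨[x], [], rfl⟩)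
          (Submodule.subset_span ⟨[], [x], rfl⟩)
      exact mulT_mem_TW D.toFreeRBAData h1
        (by rw [show (sing k ⟨(y :: s').map RBL.var, RBL.wordValid_map_var (y :: s')⟩
              : RBMod k X) = varWord k (y :: s') from rfl]
            exact ih)

lemma Dl_varWord_append (D : FreeRBBialgData k X lam) (s t : List X) :
    D.Dl (varWord k (s ++ t))
      = D.toFreeRBAData.mulT (D.Dl (varWord k s)) (D.Dl (varWord k t)) := by
  induction s with
  | nil =>
    rw [List.nil_append, show varWord k ([] : List X) = sing k RBWord.one from rfl,
      D.Dl_one, mulT_one_left]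
  | cons x s ih =>
    have hx : D.Dl (varWord k [x])
        = D.Dl (sing k ⟨[RBL.var x], RBL.wordValid_var x⟩) := rfl
    have key : ∀ (m : List X), m ≠ [] → D.Dl (varWord k (x :: m))
        = D.toFreeRBAData.mulT (D.Dl (varWord k [x])) (D.Dl (varWord k m)) := by
      intro m hm
      have hne : (m.map RBL.var : List (RBL X)) ≠ [] := by
        cases m with | nil => exact absurd rfl hm | cons _ _ => simp
      rw [show varWord k (x :: m)
          = sing k ⟨RBL.var x :: m.map RBL.var, RBL.wordValid_map_var (x :: m)⟩ from rfl,
        D.Dl_cons (RBL.var x) (m.map RBL.var) _ (RBL.wordValid_var x)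
          (RBL.wordValid_map_var m) hne]
      rfl
    cases hst : s ++ t with
    | nil =>
      obtain ⟨hs, ht⟩ := List.append_eq_nil_iff.mp hst
      subst hs; subst ht
      rw [List.append_nil]
      rw [show varWord k ([] : List X) = sing k RBWord.one from rfl, D.Dl_one]
      exact (mulT_one_right D.toFreeRBAData (Dl_varWord_mem_TW D [x])).symm
    | cons y m =>
      have hne : s ++ t ≠ [] := by rw [hst]; simp
      have step1 : D.Dl (varWord k ((x :: s) ++ t))
          = D.toFreeRBAData.mulT (D.Dl (varWord k [x])) (D.Dl (varWord k (s ++ t))) :=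
        key (s ++ t) hne
      rw [step1, ih, mulT_assoc D.toFreeRBAData (Dl_varWord_mem_TW D [x])
        (Dl_varWord_mem_TW D s) (Dl_varWord_mem_TW D t)]
      have h2 : D.toFreeRBAData.mulT (D.Dl (varWord k [x])) (D.Dl (varWord k s))
          = D.Dl (varWord k (x :: s)) := by
        cases s with
        | nil =>
          rw [show varWord k ([] : List X) = sing k RBWord.one from rfl, D.Dl_one]
          exact mulT_one_right D.toFreeRBAData (Dl_varWord_mem_TW D [x])
        | cons z s' => exact (key (z :: s') (by simp)).symm
      rw [h2]

end Aux

/-- For words `u = x₁ ⋯ x_p` and `v = y₁ ⋯ y_q` in the free monoid `M(X)`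
(possibly empty), `Δ(u ⋄ v) = Δ(u) ⋄ Δ(v)`. -/
theorem coproduct_diamond_words
    {k : Type v} [CommRing k] {X : Type u} {lam : k} (D : FreeRBBialgData k X lam)
    (s t : List X) :
    D.Dl (D.d (varWord k s) (varWord k t))
      = D.toFreeRBAData.mulT (D.Dl (varWord k s)) (D.Dl (varWord k t)) := by
  rw [d_varWord, Dl_varWord_append]
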